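/- Let a, b > 0 with a ≠ 1, b ≠ 1, and a ≠ b. Then the function f(x) = (a^x − 1)/(b^x − 1) is either strictly increasing on (0,∞) or strictly decreasing on (0,∞). -/

import Mathlib

open Real Set

noncomputable def Kfun (s : ℝ) : ℝ := (1 - Real.exp (-s)) / s

lemma Kfun_hasDeriv {s : ℝ} (hs : s ≠ 0) :
    HasDerivAt Kfun (((1 + s) * Real.exp (-s) - 1) / s ^ 2) s := by
  have h1 : HasDerivAt (fun s : ℝ => 1 - Real.exp (-s)) (Real.exp (-s)) s := by
    have h := (Real.hasDerivAt_exp (-s)).comp s (hasDerivAt_neg s)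
    exact ((hasDerivAt_const s (1:ℝ)).sub h).congr_deriv (by simp)
  have h2 : HasDerivAt (fun s : ℝ => s) 1 s := hasDerivAt_id s
  have h3 := h1.div h2 hs
  exact h3.congr_deriv (by ring)

lemma Kfun_deriv_neg {s : ℝ} (hs : s ≠ 0) :
    deriv Kfun s < 0 := by
  rw [(Kfun_hasDeriv hs).deriv]
  apply div_neg_of_neg_of_pos
  · have h1 : s + 1 < Real.exp s := Real.add_one_lt_exp hs
    have h2 : Real.exp (-s) * Real.exp s = 1 := by
      rw [← Real.exp_add]; simp
    nlinarith [Real.exp_pos (-s), Real.exp_pos s]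
  · positivity

lemma Kfun_anti_Ioi : StrictAntiOn Kfun (Ioi 0) := by
  apply strictAntiOn_of_deriv_neg (convex_Ioi 0)
  · intro s hs
    exact ((Kfun_hasDeriv (ne_of_gt hs)).differentiableAt.continuousAt).continuousWithinAt
  · intro s hs
    rw [interior_Ioi] at hs
    exact Kfun_deriv_neg (ne_of_gt hs)

lemma Kfun_anti_Iio : StrictAntiOn Kfun (Iio 0) := by
  apply strictAntiOn_of_deriv_neg (convex_Iio 0)
  · intro s hs
    exact ((Kfun_hasDeriv (ne_of_lt hs)).differentiableAt.continuousAt).continuousWithinAt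
  · intro s hs
    rw [interior_Iio] at hs
    exact Kfun_deriv_neg (ne_of_lt hs)

lemma Kfun_lt {s t : ℝ} (hs : s ≠ 0) (ht : t ≠ 0) (hst : s < t) : Kfun t < Kfun s := by
  rcases hs.lt_or_gt with hsneg | hspos
  · rcases ht.lt_or_gt with htneg | htpos
    · exact Kfun_anti_Iio hsneg htneg hst
    · have h1 : Kfun t < 1 := by
        rw [Kfun, div_lt_one htpos]
        nlinarith [Real.add_one_lt_exp (neg_ne_zero.2 ht)]
      have h2 : 1 < Kfun s := by
        rw [Kfun, lt_div_iff_of_neg hsneg]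
        nlinarith [Real.add_one_lt_exp (neg_ne_zero.2 hs)]
      linarith
  · exact Kfun_anti_Ioi hspos (hspos.trans hst) hst

lemma key_pos {p q : ℝ} (hp : p ≠ 0) (hq : q ≠ 0) (hpq : p ≠ q)
    (hc : 0 < p * q * (p - q)) {x : ℝ} (hx : 0 < x) :
    0 < p * q * x * (Kfun (q * x) - Kfun (p * x)) := by
  have hpx : p * x ≠ 0 := mul_ne_zero hp hx.ne'
  have hqx : q * x ≠ 0 := mul_ne_zero hq hx.ne'
  rcases hpq.lt_or_gt with hlt | hlt
  · -- p < q : p*x < q*x, K(q*x) < K(p*x), and p*q < 0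
    have h1 : p * x < q * x := mul_lt_mul_of_pos_right hlt hx
    have h2 : Kfun (q * x) < Kfun (p * x) := Kfun_lt hpx hqx h1
    have h3 : p * q < 0 := by nlinarith
    have h4 : p * q * x < 0 := mul_neg_of_neg_of_pos h3 hx
    exact mul_pos_of_neg_of_neg h4 (by linarith)
  · -- q < p : q*x < p*x, K(p*x) < K(q*x), and p*q > 0
    have h1 : q * x < p * x := mul_lt_mul_of_pos_right hlt hx
    have h2 : Kfun (p * x) < Kfun (q * x) := Kfun_lt hqx hpx h1
    have h3 : 0 < p * q := by nlinarith
    have h4 : 0 < p * q * x := mul_pos h3 hx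
    exact mul_pos h4 (by linarith)

/-- For `a, b > 0` with `a ≠ 1`, `b ≠ 1`, `a ≠ b`, the function
`f(x) = (aˣ − 1)/(bˣ − 1)` is either strictly increasing or strictly decreasing on `(0,∞)`. -/
theorem stmt10 (a b : ℝ) (ha : 0 < a) (hb : 0 < b) (ha1 : a ≠ 1) (hb1 : b ≠ 1) (hab : a ≠ b) :
    StrictMonoOn (fun x : ℝ => (a ^ x - 1) / (b ^ x - 1)) (Ioi 0) ∨
      StrictAntiOn (fun x : ℝ => (a ^ x - 1) / (b ^ x - 1)) (Ioi 0) := by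
  set p := Real.log a with hpdef
  set q := Real.log b with hqdef
  have hp : p ≠ 0 := fun h => ha1 (by rw [← Real.exp_log ha, ← hpdef, h, Real.exp_zero])
  have hq : q ≠ 0 := fun h => hb1 (by rw [← Real.exp_log hb, ← hqdef, h, Real.exp_zero])
  have hpq : p ≠ q := fun h => hab (by rw [← Real.exp_log ha, ← Real.exp_log hb, ← hpdef, ← hqdef, h])
  have hfeq : (fun x : ℝ => (a ^ x - 1) / (b ^ x - 1)) =
      fun x : ℝ => (Real.exp (p * x) - 1) / (Real.exp (q * x) - 1) := by
    funext x
    rw [Real.rpow_def_of_pos ha, Real.rpow_def_of_pos hb]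
  -- derivative facts
  have hderiv : ∀ x : ℝ, x ≠ 0 →
      HasDerivAt (fun x : ℝ => (Real.exp (p * x) - 1) / (Real.exp (q * x) - 1))
        ((Real.exp (p * x) * p * (Real.exp (q * x) - 1)
          - (Real.exp (p * x) - 1) * (Real.exp (q * x) * q)) / (Real.exp (q * x) - 1) ^ 2) x := by
    intro x hx
    have hqx : q * x ≠ 0 := mul_ne_zero hq hx
    have hden : Real.exp (q * x) - 1 ≠ 0 := by
      intro h
      have : Real.exp (q * x) = Real.exp 0 := by rw [Real.exp_zero]; linarith
      exact hqx (Real.exp_injective this)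
    have hN : HasDerivAt (fun x : ℝ => Real.exp (p * x) - 1) (Real.exp (p * x) * p) x := by
      have hlin : HasDerivAt (fun x : ℝ => p * x) p x := by
        simpa using (hasDerivAt_id x).const_mul p
      simpa using ((Real.hasDerivAt_exp (p * x)).comp x hlin).sub_const 1
    have hD : HasDerivAt (fun x : ℝ => Real.exp (q * x) - 1) (Real.exp (q * x) * q) x := by
      have hlin : HasDerivAt (fun x : ℝ => q * x) q x := by
        simpa using (hasDerivAt_id x).const_mul q
      simpa using ((Real.hasDerivAt_exp (q * x)).comp x hlin).sub_const 1
    exact hN.div hD hden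
  -- numerator identity
  have hnum : ∀ x : ℝ, x ≠ 0 →
      Real.exp (p * x) * p * (Real.exp (q * x) - 1)
        - (Real.exp (p * x) - 1) * (Real.exp (q * x) * q)
      = (Real.exp (p * x) * Real.exp (q * x)) *
          (p * q * x * (Kfun (q * x) - Kfun (p * x))) := by
    intro x hx
    have hpx : p * x ≠ 0 := mul_ne_zero hp hx
    have hqx : q * x ≠ 0 := mul_ne_zero hq hx
    rw [Kfun, Kfun, Real.exp_neg, Real.exp_neg]
    field_simp
  have hcont : ContinuousOn (fun x : ℝ => (Real.exp (p * x) - 1) / (Real.exp (q * x) - 1)) (Ioi 0) := by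
    intro x hx
    exact ((hderiv x (ne_of_gt hx)).differentiableAt.continuousAt).continuousWithinAt
  rcases lt_or_gt_of_ne (show p * q * (p - q) ≠ 0 from by
      exact mul_ne_zero (mul_ne_zero hp hq) (sub_ne_zero.2 hpq)) with hc | hc
  · -- c < 0 : strictly decreasing
    right
    rw [hfeq]
    apply strictAntiOn_of_deriv_neg (convex_Ioi 0) hcont
    intro x hx
    rw [interior_Ioi] at hx
    rw [(hderiv x (ne_of_gt hx)).deriv]
    apply div_neg_of_neg_of_pos
    · rw [hnum x (ne_of_gt hx)]
      have h1 : 0 < q * p * x * (Kfun (p * x) - Kfun (q * x)) :=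
        key_pos hq hp hpq.symm (by nlinarith) hx
      have h2 : 0 < Real.exp (p * x) * Real.exp (q * x) := by positivity
      nlinarith
    · have hqx : q * x ≠ 0 := mul_ne_zero hq (ne_of_gt hx)
      have hden : Real.exp (q * x) - 1 ≠ 0 := by
        intro h
        have : Real.exp (q * x) = Real.exp 0 := by rw [Real.exp_zero]; linarith
        exact hqx (Real.exp_injective this)
      exact lt_of_le_of_ne (sq_nonneg _) (Ne.symm (pow_ne_zero 2 hden))
  · -- c > 0 : strictly increasing
    left
    rw [hfeq]
    apply strictMonoOn_of_deriv_pos (convex_Ioi 0) hcont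
    intro x hx
    rw [interior_Ioi] at hx
    rw [(hderiv x (ne_of_gt hx)).deriv]
    apply div_pos
    · rw [hnum x (ne_of_gt hx)]
      have h1 : 0 < p * q * x * (Kfun (q * x) - Kfun (p * x)) := key_pos hp hq hpq hc hx
      have h2 : 0 < Real.exp (p * x) * Real.exp (q * x) := by positivity
      exact mul_pos h2 h1
    · have hqx : q * x ≠ 0 := mul_ne_zero hq (ne_of_gt hx)
      have hden : Real.exp (q * x) - 1 ≠ 0 := by
        intro h
        have : Real.exp (q * x) = Real.exp 0 := by rw [Real.exp_zero]; linarith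
        exact hqx (Real.exp_injective this)
      exact lt_of_le_of_ne (sq_nonneg _) (Ne.symm (pow_ne_zero 2 hden))
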